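/- lim_{n→∞} (2π/n)·( 8·log( ∏_{j=⌊n/4⌋+1}^{⌊n/4⌋+⌊n/2⌋} 2 sin(jπ/n) ) − 4·log( ∏_{j=1}^{⌊n/2⌋} 2 sin(jπ/n) ) ) = 32·Λ(π/4) = 4·v_oct. [The exact exponential growth rate of the single dominant term in the lower bound (6.9) of the proof of Theorem 6.2, computed via Λ with 2Λ(π/2) + 4Λ(π/4) − 4Λ(3π/4) = 8Λ(π/4).] -/

import Mathlib

open Finset Filter Real

/-- The sine factorial `(k)!_n = ∏_{j=1}^k 2 sin(jπ/n)`. -/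
noncomputable def sf (n k : ℕ) : ℝ :=
  ∏ j ∈ Finset.Icc 1 k, 2 * Real.sin (j * Real.pi / n)

/-- The Lobachevsky function `Λ(x) = -∫₀ˣ log|2 sin t| dt`. -/
noncomputable def lob (x : ℝ) : ℝ := -∫ t in (0:ℝ)..x, Real.log |2 * Real.sin t|

open MeasureTheory intervalIntegral Topology

noncomputable def lsin (t : ℝ) : ℝ := Real.log (2 * Real.sin t)

lemma continuousOn_lsin {s : Set ℝ} (hs : ∀ x ∈ s, 0 < Real.sin x) :
    ContinuousOn lsin s := fun x hx =>
  ((Real.continuousAt_log (by have := hs x hx; show (2:ℝ) * Real.sin x ≠ 0; exact ne_of_gt (by linarith))).comp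
    ((continuous_const.mul Real.continuous_sin).continuousAt)).continuousWithinAt

lemma lsin_mono {x y : ℝ} (hx : 0 < x) (hxy : x ≤ y) (hy : y ≤ π / 2) :
    lsin x ≤ lsin y := by
  have hsx : 0 < Real.sin x := Real.sin_pos_of_pos_of_lt_pi hx
    (lt_of_le_of_lt (hxy.trans hy) (by linarith [Real.pi_pos]))
  apply Real.log_le_log (by linarith)
  have := Real.strictMonoOn_sin.monotoneOn (a := x) (b := y)
    ⟨by linarith, by linarith⟩ ⟨by linarith [Real.pi_pos], hy⟩ hxy
  linarith

lemma neg_log_le (t : ℝ) (ht : 0 < t) : -Real.log t ≤ 2 * t ^ (-(1:ℝ)/2) := by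
  have h1 : Real.log (t ^ (-(1:ℝ)/2)) ≤ t ^ (-(1:ℝ)/2) := by
    calc Real.log (t ^ (-(1:ℝ)/2)) ≤ t ^ (-(1:ℝ)/2) - 1 :=
      Real.log_le_sub_one_of_pos (by positivity)
    _ ≤ _ := by linarith
  rw [Real.log_rpow ht] at h1
  linarith

lemma two_sin_bounds {t : ℝ} (ht0 : 0 < t) (ht1 : t ≤ π / 2) :
    t ≤ 2 * Real.sin t ∧ 2 * Real.sin t ≤ π := by
  constructor
  · have h := Real.mul_le_sin ht0.le ht1
    have hπ : (0:ℝ) < π := Real.pi_pos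
    have h2 : 2 * t ≤ π * Real.sin t := by
      rw [div_mul_eq_mul_div, div_le_iff₀ hπ] at h
      linarith
    have hs : 0 < Real.sin t := Real.sin_pos_of_pos_of_lt_pi ht0 (by linarith)
    nlinarith [Real.pi_le_four]
  · have := Real.sin_le ht0.le
    linarith [Real.pi_pos]

lemma intInt_lsin : IntervalIntegrable lsin volume 0 (π / 2) := by
  have hmeas : AEStronglyMeasurable lsin (volume.restrict (Set.uIoc 0 (π/2))) :=
    (Real.measurable_log.comp ((Real.measurable_sin).const_mul 2)).aestronglyMeasurable
  have hbig : IntervalIntegrable (fun t => 2 * t ^ (-(1:ℝ)/2) + 3) volume 0 (π/2) :=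
    ((intervalIntegrable_rpow' (by norm_num)).const_mul 2).add intervalIntegrable_const
  refine hbig.mono_fun hmeas ?_
  have hsub : Set.uIoc (0:ℝ) (π/2) = Set.Ioc 0 (π/2) := Set.uIoc_of_le (by positivity)
  rw [Filter.EventuallyLE, hsub, ae_restrict_iff' measurableSet_Ioc]
  filter_upwards with t ht
  rcases ht with ⟨ht0, ht1⟩
  obtain ⟨hge, hle⟩ := two_sin_bounds ht0 ht1
  have hsin : 0 < Real.sin t := Real.sin_pos_of_pos_of_lt_pi ht0 (by linarith [Real.pi_pos])
  have hb : ‖lsin t‖ ≤ 2 * t ^ (-(1:ℝ)/2) + 3 := by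
    have hrp : (0:ℝ) < t ^ (-(1:ℝ)/2) := by positivity
    rw [Real.norm_eq_abs, abs_le]
    constructor
    · have h1 : Real.log t ≤ lsin t := Real.log_le_log ht0 hge
      have := neg_log_le t ht0
      linarith
    · have h2 : lsin t ≤ Real.log π := Real.log_le_log (by linarith) hle
      have h3 : Real.log π ≤ 3 := by
        calc Real.log π ≤ π - 1 := Real.log_le_sub_one_of_pos Real.pi_pos
        _ ≤ 3 := by linarith [Real.pi_le_four]
      linarith
  have heq : ‖2 * t ^ (-(1:ℝ)/2) + 3‖ = 2 * t ^ (-(1:ℝ)/2) + 3 := by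
    rw [Real.norm_eq_abs, abs_of_pos (by positivity)]
  rw [heq]; exact hb

lemma abs_one_sub_exp {θ : ℝ} (h0 : 0 ≤ θ) (h1 : θ ≤ 2 * π) :
    ‖1 - Complex.exp (θ * Complex.I)‖ = 2 * Real.sin (θ / 2) := by
  rw [Complex.exp_mul_I]
  have : (1 : ℂ) - (Complex.cos θ + Complex.sin θ * Complex.I)
      = Complex.ofReal (1 - Real.cos θ) + Complex.ofReal (-Real.sin θ) * Complex.I := by
    push_cast [Complex.ofReal_cos, Complex.ofReal_sin]
    ring
  rw [this, Complex.norm_add_mul_I]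
  have hsq : (1 - Real.cos θ) ^ 2 + (-Real.sin θ) ^ 2 = 4 * ((1 - Real.cos θ)/2) := by
    have := Real.sin_sq_add_cos_sq θ
    ring_nf
    nlinarith [this]
  rw [hsq, show (4 : ℝ) * ((1 - Real.cos θ)/2) = 2^2 * ((1 - Real.cos θ)/2) by norm_num,
    Real.sqrt_mul (by norm_num), Real.sqrt_sq (by norm_num), ← Real.sin_half_eq_sqrt h0 h1]

lemma prod_two_sin (n : ℕ) (hn : 1 ≤ n) :
    ∏ j ∈ Finset.Icc 1 (n - 1), (2 * Real.sin (j * π / n)) = n := by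
  obtain ⟨N, rfl⟩ : ∃ N, n = N + 1 := ⟨n - 1, by omega⟩
  set n := N + 1 with hn_def
  have hprim := Complex.isPrimitiveRoot_exp n (by omega)
  have hprod := hprim.prod_one_sub_pow_eq_order
  have habs := congrArg (‖·‖) hprod
  rw [norm_prod] at habs
  have hval : ∀ k ∈ Finset.range N,
      ‖1 - Complex.exp (2 * ↑π * Complex.I / ↑n) ^ (k + 1)‖
        = 2 * Real.sin ((k+1) * π / n) := by
    intro k hk
    rw [mem_range] at hk
    rw [← Complex.exp_nat_mul]
    have harg : (k + 1 : ℕ) * (2 * ↑π * Complex.I / ↑n)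
        = Complex.ofReal ((k+1) * (2 * π) / n) * Complex.I := by
      push_cast
      have : (n : ℂ) ≠ 0 := by exact_mod_cast (by omega : (n:ℕ) ≠ 0)
      field_simp
    rw [harg, abs_one_sub_exp]
    · congr 1
      push_cast
      ring
    · positivity
    · rw [div_le_iff₀ (by exact_mod_cast (by omega : 0 < n))]
      have : ((k:ℝ) + 1) ≤ n := by exact_mod_cast (by omega : k + 1 ≤ n)
      nlinarith [Real.pi_pos]
  rw [Finset.prod_congr rfl hval] at habs
  have habs2 : ∏ k ∈ Finset.range N, (2 * Real.sin ((k+1) * π / n)) = n := by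
    rw [habs]
    rw [show ((N:ℂ) + 1) = ((n : ℕ) : ℂ) by rw [hn_def]; push_cast; ring, Complex.norm_natCast]
  calc ∏ j ∈ Finset.Icc 1 (n - 1), (2 * Real.sin (j * π / n))
      = ∏ k ∈ Finset.range N, (2 * Real.sin ((k+1) * π / n)) := by
        rw [show Finset.Icc 1 (n - 1) = Finset.Ico 1 n by ext x; simp; omega,
          Finset.prod_Ico_eq_prod_range]
        apply Finset.prod_congr (by congr 1)
        intro i _
        congr 2
        push_cast
        ring
    _ = n := habs2

lemma term_pos {n j : ℕ} (h1 : 1 ≤ j) (h2 : j ≤ n - 1) : 0 < 2 * Real.sin (j * π / n) := by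
  have hn : 2 ≤ n := by omega
  have hn0 : (0:ℝ) < n := by exact_mod_cast (by omega : 0 < n)
  have hj0 : (0:ℝ) < j := by exact_mod_cast h1
  have hjn : (j:ℝ) < n := by exact_mod_cast (by omega : j < n)
  have h : 0 < Real.sin (j * π / n) := by
    apply Real.sin_pos_of_pos_of_lt_pi
    · positivity
    · rw [div_lt_iff₀ hn0]
      nlinarith [Real.pi_pos]
  linarith

lemma prod_reflect (n a b : ℕ) (hn : 1 ≤ n) (hab : a ≤ b) (hb : b ≤ n - 1) :
    ∏ j ∈ Finset.Ioc a b, (2 * Real.sin (j * π / n))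
      = ∏ j ∈ Finset.Ioc (n - 1 - b) (n - 1 - a), (2 * Real.sin (j * π / n)) := by
  refine Finset.prod_nbij' (fun j => n - j) (fun j => n - j) ?_ ?_ ?_ ?_ ?_
  · intro x hx; rw [Finset.mem_Ioc] at *; omega
  · intro x hx; rw [Finset.mem_Ioc] at *; omega
  · intro x hx; rw [Finset.mem_Ioc] at hx; omega
  · intro x hx; rw [Finset.mem_Ioc] at hx; omega
  · intro x hx
    rw [Finset.mem_Ioc] at hx
    have hxn : x ≤ n := by omega
    have hc : ((n - x : ℕ) : ℝ) = (n : ℝ) - x := by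
      rw [Nat.cast_sub hxn]
    have hn0 : (n:ℝ) ≠ 0 := by exact_mod_cast (by omega : n ≠ 0)
    rw [hc, show ((n:ℝ) - x) * π / n = π - x * π / n by field_simp, Real.sin_pi_sub]

lemma intInt_on {a b : ℝ} (ha : 0 < a) (hab : a ≤ b) (hb : b ≤ π / 2) :
    IntervalIntegrable lsin volume a b := by
  apply ContinuousOn.intervalIntegrable
  rw [Set.uIcc_of_le hab]
  apply continuousOn_lsin
  intro x hx
  exact Real.sin_pos_of_pos_of_lt_pi (lt_of_lt_of_le ha hx.1)
    (lt_of_le_of_lt (hx.2.trans hb) (by linarith [Real.pi_pos]))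

lemma sandwich (n k : ℕ) (hk1 : 1 ≤ k) (hk2 : 2 * (k + 1) ≤ n) :
    (∫ t in (π/(n:ℝ))..((k:ℝ) * π / n), lsin t)
        ≤ π/(n:ℝ) * ∑ j ∈ Finset.Icc 2 k, lsin (j * π / n)
      ∧ π/(n:ℝ) * ∑ j ∈ Finset.Icc 2 k, lsin (j * π / n)
        ≤ ∫ t in (2*π/(n:ℝ))..(((k:ℝ)+1) * π / n), lsin t := by
  have hn4 : 4 ≤ n := by omega
  have hn0 : (0:ℝ) < n := by exact_mod_cast (by omega : 0 < n)
  set h : ℝ := π / n with hh_def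
  have hh : 0 < h := by positivity
  have hbound : ∀ j : ℕ, j ≤ k + 1 → (j:ℝ) * h ≤ π / 2 := by
    intro j hj
    have h1 : (j:ℝ) ≤ k + 1 := by exact_mod_cast hj
    have h2 : 2 * ((k:ℝ) + 1) ≤ n := by exact_mod_cast hk2
    rw [hh_def, mul_div_assoc']
    rw [div_le_div_iff₀ hn0 (by norm_num)]
    nlinarith [Real.pi_pos]
  -- rewrite sum over Icc 2 k as sum over range (k-1)
  have hsum : π/(n:ℝ) * ∑ j ∈ Finset.Icc 2 k, lsin (j * π / n)
      = ∑ i ∈ Finset.range (k - 1), h * lsin (((i:ℝ) + 2) * h) := by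
    rw [Finset.mul_sum, show Finset.Icc 2 k = Finset.Ico 2 (k+1) by rw [Finset.Ico_add_one_right_eq_Icc],
      Finset.sum_Ico_eq_sum_range]
    apply Finset.sum_congr (by congr 1)
    intro i _
    rw [hh_def]
    congr 2
    push_cast
    ring
  have hint : ∀ i : ℕ, i < k - 1 →
      IntervalIntegrable lsin volume (((i:ℝ)+1)*h) (((i:ℝ)+2)*h) := by
    intro i hi
    apply intInt_on (by positivity) (by nlinarith)
    have := hbound (i+2) (by omega)
    push_cast at this ⊢
    linarith
  have hint2 : ∀ i : ℕ, i < k - 1 →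
      IntervalIntegrable lsin volume (((i:ℝ)+2)*h) (((i:ℝ)+3)*h) := by
    intro i hi
    apply intInt_on (by positivity) (by nlinarith)
    have := hbound (i+3) (by omega)
    push_cast at this ⊢
    linarith
  constructor
  · -- lower bound
    have key : ∀ i ∈ Finset.range (k - 1),
        (∫ t in (((i:ℝ)+1)*h)..(((i:ℝ)+2)*h), lsin t) ≤ h * lsin (((i:ℝ) + 2) * h) := by
      intro i hi
      rw [Finset.mem_range] at hi
      have hcst : h * lsin (((i:ℝ) + 2) * h)
          = ∫ _ in (((i:ℝ)+1)*h)..(((i:ℝ)+2)*h), lsin (((i:ℝ) + 2) * h) := by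
        rw [intervalIntegral.integral_const, smul_eq_mul]
        ring
      rw [hcst]
      apply intervalIntegral.integral_mono_on (by nlinarith) (hint i hi)
        intervalIntegrable_const
      intro x hx
      apply lsin_mono (by nlinarith [hx.1]) hx.2
      have := hbound (i+2) (by omega)
      push_cast at this
      linarith
    have hadj := intervalIntegral.sum_integral_adjacent_intervals
      (a := fun i => ((i:ℝ)+1)*h) (n := k - 1) (f := lsin) (μ := volume) ?_
    · simp only [Nat.cast_zero, zero_add, one_mul, Nat.cast_add, Nat.cast_one,
        Nat.cast_sub hk1] at hadj
      rw [hsum, show ((k:ℝ)*π/n) = ((k:ℝ)-1+1)*h from by rw [hh_def]; ring, ← hadj]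
      apply Finset.sum_le_sum
      intro i hi
      have h2 := key i hi
      rw [show ((i:ℝ)+1+1)*h = ((i:ℝ)+2)*h from by ring]
      exact h2
    · intro i hi
      have := hint i hi
      convert this using 2 <;> push_cast <;> ring
  · -- upper bound
    have key : ∀ i ∈ Finset.range (k - 1),
        h * lsin (((i:ℝ) + 2) * h) ≤ ∫ t in (((i:ℝ)+2)*h)..(((i:ℝ)+3)*h), lsin t := by
      intro i hi
      rw [Finset.mem_range] at hi
      have hcst : h * lsin (((i:ℝ) + 2) * h)
          = ∫ _ in (((i:ℝ)+2)*h)..(((i:ℝ)+3)*h), lsin (((i:ℝ) + 2) * h) := by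
        rw [intervalIntegral.integral_const, smul_eq_mul]
        ring
      rw [hcst]
      apply intervalIntegral.integral_mono_on (by nlinarith) intervalIntegrable_const
        (hint2 i hi)
      intro x hx
      apply lsin_mono (by positivity) hx.1
      have := hbound (i+3) (by omega)
      push_cast at this
      linarith [hx.2]
    have hadj := intervalIntegral.sum_integral_adjacent_intervals
      (a := fun i => ((i:ℝ)+2)*h) (n := k - 1) (f := lsin) (μ := volume) ?_
    · simp only [Nat.cast_zero, zero_add, Nat.cast_add, Nat.cast_one,
        Nat.cast_sub hk1] at hadj
      rw [hsum, show (2*π/(n:ℝ)) = 2*h from by rw [hh_def]; ring,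
        show (((k:ℝ)+1)*π/n) = ((k:ℝ)-1+2)*h from by rw [hh_def]; ring, ← hadj]
      apply Finset.sum_le_sum
      intro i hi
      have h2 := key i hi
      rw [show ((i:ℝ)+1+2)*h = ((i:ℝ)+3)*h from by ring]
      exact h2
    · intro i hi
      have := hint2 i hi
      convert this using 2 <;> push_cast <;> ring

noncomputable def Fp (x : ℝ) : ℝ := ∫ t in (0:ℝ)..x, lsin t

lemma intInt_lsin_sub {a b : ℝ} (ha : a ∈ Set.Icc 0 (π/2)) (hb : b ∈ Set.Icc 0 (π/2)) :
    IntervalIntegrable lsin volume a b := by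
  apply intInt_lsin.mono_set
  rw [Set.uIcc_of_le (by positivity : (0:ℝ) ≤ π/2)]
  exact Set.uIcc_subset_Icc ha hb

lemma Fp_cont : ContinuousOn Fp (Set.Icc 0 (π/2)) := by
  have h := intervalIntegral.continuousOn_primitive_interval (f := lsin) (a := 0) (b := π/2)
    (μ := volume) ?_
  · rwa [Set.uIcc_of_le (by positivity : (0:ℝ) ≤ π/2)] at h
  · rw [Set.uIcc_of_le (by positivity : (0:ℝ) ≤ π/2)]
    rw [integrableOn_Icc_iff_integrableOn_Ioc]
    exact (intervalIntegrable_iff_integrableOn_Ioc_of_le (by positivity)).mp intInt_lsin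

lemma Fp_zero : Fp 0 = 0 := intervalIntegral.integral_same

lemma tendsto_F_of_tendsto_zero (e : ℕ → ℝ) (he : Tendsto e atTop (𝓝 0))
    (hmem : ∀ᶠ n in atTop, e n ∈ Set.Icc 0 (π/2)) :
    Tendsto (fun n => Fp (e n)) atTop (𝓝 0) := by
  have h0 : (0:ℝ) ∈ Set.Icc 0 (π/2) := ⟨le_refl 0, by positivity⟩
  have hcw : ContinuousWithinAt Fp (Set.Icc 0 (π/2)) 0 := Fp_cont 0 h0
  have := hcw.tendsto.comp (tendsto_nhdsWithin_iff.mpr ⟨he, hmem⟩)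
  rwa [Fp_zero] at this

lemma tendsto_F_of_tendsto_quarter (e : ℕ → ℝ) (he : Tendsto e atTop (𝓝 (π/4))) :
    Tendsto (fun n => Fp (e n)) atTop (𝓝 (Fp (π/4))) := by
  have hmem : Set.Icc (0:ℝ) (π/2) ∈ nhds (π/4) := by
    apply Icc_mem_nhds <;> linarith [Real.pi_pos]
  exact (Fp_cont.continuousAt hmem).tendsto.comp he

lemma tendsto_log_term : Tendsto (fun n : ℕ => π/(n:ℝ) * lsin (π/n)) atTop (𝓝 0) := by
  apply squeeze_zero_norm' (a := fun n : ℕ => π * Real.log n / n)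
  · filter_upwards [eventually_ge_atTop 4] with n hn
    have hn0 : (0:ℝ) < n := by exact_mod_cast (by omega : 0 < n)
    have hn4 : (4:ℝ) ≤ n := by exact_mod_cast hn
    have ht0 : (0:ℝ) < π/n := by positivity
    have ht1 : π/(n:ℝ) ≤ π/2 := by
      apply div_le_div_of_nonneg_left (le_of_lt Real.pi_pos) (by norm_num) (by linarith)
    obtain ⟨hge, hle⟩ := two_sin_bounds ht0 ht1
    have hlogn : 0 ≤ Real.log n := Real.log_nonneg (by linarith)
    have habs : |lsin (π/n)| ≤ Real.log n := by
      rw [abs_le]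
      constructor
      · have h1 : Real.log (π/n) ≤ lsin (π/n) := Real.log_le_log ht0 hge
        rw [Real.log_div (ne_of_gt Real.pi_pos) (ne_of_gt hn0)] at h1
        have : 0 ≤ Real.log π := Real.log_nonneg (by linarith [Real.pi_gt_three])
        linarith
      · have h2 : lsin (π/n) ≤ Real.log π := Real.log_le_log (by linarith) hle
        have : Real.log π ≤ Real.log n := Real.log_le_log Real.pi_pos (by linarith [Real.pi_le_four])
        linarith
    rw [norm_mul, Real.norm_eq_abs, Real.norm_eq_abs, abs_of_pos ht0]
    calc π/(n:ℝ) * |lsin (π/n)| ≤ π/(n:ℝ) * Real.log n := by gcongr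
    _ = π * Real.log n / n := by ring
  · have h1 : Tendsto (fun x : ℝ => Real.log x / x) atTop (𝓝 0) :=
      Real.isLittleO_log_id_atTop.tendsto_div_nhds_zero
    have h2 := (h1.comp (tendsto_natCast_atTop_atTop (R := ℝ))).const_mul π
    rw [mul_zero] at h2
    convert h2 using 2 with n
    simp [Function.comp]
    ring

lemma riemann_sum (k : ℕ → ℕ)
    (hk1 : ∀ᶠ n in atTop, 1 ≤ k n)
    (hk2 : ∀ᶠ n in atTop, 2 * (k n + 1) ≤ n)
    (hk3 : Tendsto (fun n : ℕ => (k n : ℝ) / n) atTop (𝓝 (1 / 4))) :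
    Tendsto (fun n : ℕ => π/(n:ℝ) * ∑ j ∈ Finset.Icc 1 (k n), lsin (j * π / n)) atTop
      (𝓝 (∫ t in (0:ℝ)..(π/4), lsin t)) := by
  have hπ := Real.pi_pos
  -- x n := k n * π / n tends to π/4
  have hx : Tendsto (fun n : ℕ => (k n : ℝ) * π / n) atTop (𝓝 (π/4)) := by
    have := hk3.mul_const π
    rw [show (1:ℝ)/4 * π = π/4 by ring] at this
    apply this.congr
    intro n
    ring
  have hinv : Tendsto (fun n : ℕ => π/(n:ℝ)) atTop (𝓝 0) :=
    tendsto_const_div_atTop_nhds_zero_nat π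
  have hinv2 : Tendsto (fun n : ℕ => 2*π/(n:ℝ)) atTop (𝓝 0) := by
    have := hinv.const_mul 2
    rw [mul_zero] at this
    exact this.congr (fun n => by ring)
  -- lower and upper sequences
  have hLo : Tendsto (fun n : ℕ => π/(n:ℝ) * lsin (π/n) + (Fp ((k n : ℝ) * π / n) - Fp (π/n)))
      atTop (𝓝 (Fp (π/4))) := by
    have h1 := tendsto_F_of_tendsto_quarter _ hx
    have h2 := tendsto_F_of_tendsto_zero (fun n => π/(n:ℝ)) hinv ?_
    · have := tendsto_log_term.add (h1.sub h2)
      rw [zero_add, sub_zero] at this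
      exact this
    · filter_upwards [eventually_ge_atTop 2] with n hn
      have hn0 : (0:ℝ) < n := by exact_mod_cast (by omega : 0 < n)
      have hn2 : (2:ℝ) ≤ n := by exact_mod_cast hn
      constructor
      · positivity
      · apply div_le_div_of_nonneg_left (le_of_lt hπ) (by norm_num) (by linarith)
  have hUp : Tendsto (fun n : ℕ => π/(n:ℝ) * lsin (π/n) + (Fp (((k n : ℝ)+1) * π / n) - Fp (2*π/n)))
      atTop (𝓝 (Fp (π/4))) := by
    have hx1 : Tendsto (fun n : ℕ => ((k n : ℝ)+1) * π / n) atTop (𝓝 (π/4)) := by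
      have := hx.add hinv
      rw [add_zero] at this
      apply this.congr
      intro n
      ring
    have h1 := tendsto_F_of_tendsto_quarter _ hx1
    have h2 := tendsto_F_of_tendsto_zero (fun n => 2*π/(n:ℝ)) hinv2 ?_
    · have := tendsto_log_term.add (h1.sub h2)
      rw [zero_add, sub_zero] at this
      exact this
    · filter_upwards [eventually_ge_atTop 4] with n hn
      have hn0 : (0:ℝ) < n := by exact_mod_cast (by omega : 0 < n)
      have hn2 : (4:ℝ) ≤ n := by exact_mod_cast hn
      constructor
      · positivity
      · rw [div_le_div_iff₀ hn0 (by norm_num)]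
        nlinarith
  have hJ : Fp (π/4) = ∫ t in (0:ℝ)..(π/4), lsin t := rfl
  rw [← hJ]
  apply tendsto_of_tendsto_of_tendsto_of_le_of_le' hLo hUp
  · -- lower ≤ sum
    filter_upwards [hk1, hk2, eventually_ge_atTop 8] with n h1 h2 h8
    have hn0 : (0:ℝ) < n := by exact_mod_cast (by omega : 0 < n)
    have hkn : (k n : ℝ) ≥ 1 := by exact_mod_cast h1
    have h2' : 2 * ((k n : ℝ) + 1) ≤ n := by exact_mod_cast h2
    -- split sum
    have hsplit : ∑ j ∈ Finset.Icc 1 (k n), lsin (j * π / n)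
        = lsin (π/n) + ∑ j ∈ Finset.Icc 2 (k n), lsin (j * π / n) := by
      rw [show Finset.Icc 1 (k n) = Finset.Ico 1 (k n + 1) by rw [Finset.Ico_add_one_right_eq_Icc],
        Finset.sum_eq_sum_Ico_succ_bot (by omega)]
      rw [Finset.Ico_add_one_right_eq_Icc]
      norm_num
    have hFdiff : Fp ((k n : ℝ) * π / n) - Fp (π/n) = ∫ t in (π/(n:ℝ))..((k n:ℝ) * π / n), lsin t := by
      apply intervalIntegral.integral_interval_sub_left
      · apply intInt_lsin_sub ⟨le_refl 0, by positivity⟩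
        constructor
        · positivity
        · rw [div_le_div_iff₀ hn0 (by norm_num)]
          nlinarith
      · apply intInt_lsin_sub ⟨le_refl 0, by positivity⟩
        constructor
        · positivity
        · rw [div_le_div_iff₀ hn0 (by norm_num)]
          nlinarith
    rw [hsplit, mul_add, hFdiff]
    have := (sandwich n (k n) h1 h2).1
    linarith
  · -- sum ≤ upper
    filter_upwards [hk1, hk2, eventually_ge_atTop 8] with n h1 h2 h8
    have hn0 : (0:ℝ) < n := by exact_mod_cast (by omega : 0 < n)
    have hkn : (k n : ℝ) ≥ 1 := by exact_mod_cast h1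
    have h2' : 2 * ((k n : ℝ) + 1) ≤ n := by exact_mod_cast h2
    have hsplit : ∑ j ∈ Finset.Icc 1 (k n), lsin (j * π / n)
        = lsin (π/n) + ∑ j ∈ Finset.Icc 2 (k n), lsin (j * π / n) := by
      rw [show Finset.Icc 1 (k n) = Finset.Ico 1 (k n + 1) by rw [Finset.Ico_add_one_right_eq_Icc],
        Finset.sum_eq_sum_Ico_succ_bot (by omega)]
      rw [Finset.Ico_add_one_right_eq_Icc]
      norm_num
    have hFdiff : Fp (((k n : ℝ)+1) * π / n) - Fp (2*π/n)
        = ∫ t in (2*π/(n:ℝ))..(((k n:ℝ)+1) * π / n), lsin t := by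
      apply intervalIntegral.integral_interval_sub_left
      · apply intInt_lsin_sub ⟨le_refl 0, by positivity⟩
        constructor
        · positivity
        · rw [div_le_div_iff₀ hn0 (by norm_num)]
          nlinarith
      · apply intInt_lsin_sub ⟨le_refl 0, by positivity⟩
        constructor
        · positivity
        · rw [div_le_div_iff₀ hn0 (by norm_num)]
          nlinarith
    rw [hsplit, mul_add, hFdiff]
    have := (sandwich n (k n) h1 h2).2
    linarith

lemma prod_Ioc_pos {n a b : ℕ} (hb : b ≤ n - 1) :
    0 < ∏ j ∈ Finset.Ioc a b, (2 * Real.sin (j * π / n)) := by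
  apply Finset.prod_pos
  intro j hj
  rw [Finset.mem_Ioc] at hj
  exact term_pos (by omega) (by omega)

lemma prod_Ioc_zero_eq (n : ℕ) (hn : 1 ≤ n) :
    ∏ j ∈ Finset.Ioc 0 (n - 1), (2 * Real.sin (j * π / n)) = n := by
  rw [← Finset.Icc_add_one_left_eq_Ioc]
  exact prod_two_sin n hn

lemma middle_log (n : ℕ) (hn : 8 ≤ n) :
    Real.log (∏ j ∈ Finset.Icc (n/4 + 1) (n/4 + n/2), (2 * Real.sin (j * π / n)))
      = Real.log n - (∑ j ∈ Finset.Icc 1 (n/4), lsin (j * π / n))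
        - (∑ j ∈ Finset.Icc 1 (n - 1 - n/4 - n/2), lsin (j * π / n)) := by
  set a := n/4 with ha
  set m := n/2 with hm
  set c := n - 1 - a - m with hc
  have h1 : a ≤ a + m := by omega
  have h2 : a + m ≤ n - 1 := by omega
  have htot : (∏ j ∈ Finset.Ioc 0 a, (2 * Real.sin (j * π / n)))
      * (∏ j ∈ Finset.Ioc a (a+m), (2 * Real.sin (j * π / n)))
      * (∏ j ∈ Finset.Ioc (a+m) (n-1), (2 * Real.sin (j * π / n))) = n := by
    rw [Finset.prod_Ioc_consecutive _ (Nat.zero_le a) h1,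
      Finset.prod_Ioc_consecutive _ (Nat.zero_le (a+m)) h2]
    exact prod_Ioc_zero_eq n (by omega)
  have hrefl : (∏ j ∈ Finset.Ioc (a+m) (n-1), (2 * Real.sin (j * π / n)))
      = ∏ j ∈ Finset.Ioc 0 c, (2 * Real.sin (j * π / n)) := by
    rw [prod_reflect n (a+m) (n-1) (by omega) h2 (le_refl _),
      show n - 1 - (n-1) = 0 from by omega, show n - 1 - (a+m) = c from by omega]
  rw [hrefl] at htot
  have hPa : 0 < ∏ j ∈ Finset.Ioc 0 a, (2 * Real.sin (j * π / n)) :=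
    prod_Ioc_pos (by omega)
  have hPc : 0 < ∏ j ∈ Finset.Ioc 0 c, (2 * Real.sin (j * π / n)) :=
    prod_Ioc_pos (by omega)
  have hM : 0 < ∏ j ∈ Finset.Ioc a (a+m), (2 * Real.sin (j * π / n)) :=
    prod_Ioc_pos h2
  have hlog := congrArg Real.log htot
  rw [Real.log_mul (by positivity) (ne_of_gt hPc),
    Real.log_mul (ne_of_gt hPa) (ne_of_gt hM)] at hlog
  have hIcc : Finset.Icc (a + 1) (a + m) = Finset.Ioc a (a + m) := Finset.Icc_add_one_left_eq_Ioc a (a+m)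
  have hsum1 : Real.log (∏ j ∈ Finset.Ioc 0 a, (2 * Real.sin (j * π / n)))
      = ∑ j ∈ Finset.Icc 1 a, lsin (j * π / n) := by
    rw [← Finset.Icc_add_one_left_eq_Ioc, Real.log_prod]
    · rfl
    · intro j hj
      rw [Finset.mem_Icc] at hj
      exact ne_of_gt (term_pos (by omega) (by omega))
  have hsum2 : Real.log (∏ j ∈ Finset.Ioc 0 c, (2 * Real.sin (j * π / n)))
      = ∑ j ∈ Finset.Icc 1 c, lsin (j * π / n) := by
    rw [← Finset.Icc_add_one_left_eq_Ioc, Real.log_prod]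
    · rfl
    · intro j hj
      rw [Finset.mem_Icc] at hj
      exact ne_of_gt (term_pos (by omega) (by omega))
  rw [hIcc]
  rw [hsum1, hsum2] at hlog
  linarith

lemma half_log_bounds (n : ℕ) (hn : 2 ≤ n) :
    Real.log n / 2 ≤ Real.log (∏ j ∈ Finset.Icc 1 (n/2), (2 * Real.sin (j * π / n)))
      ∧ Real.log (∏ j ∈ Finset.Icc 1 (n/2), (2 * Real.sin (j * π / n)))
        ≤ Real.log (2*(n:ℝ)) / 2 := by
  set m := n/2 with hm
  set d := n - 1 - m with hd
  have hm1 : m ≤ n - 1 := by omega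
  have hd1 : d ≤ m := by omega
  have htot : (∏ j ∈ Finset.Ioc 0 m, (2 * Real.sin (j * π / n)))
      * (∏ j ∈ Finset.Ioc m (n-1), (2 * Real.sin (j * π / n))) = n := by
    rw [Finset.prod_Ioc_consecutive _ (Nat.zero_le m) hm1]
    exact prod_Ioc_zero_eq n (by omega)
  have hrefl : (∏ j ∈ Finset.Ioc m (n-1), (2 * Real.sin (j * π / n)))
      = ∏ j ∈ Finset.Ioc 0 d, (2 * Real.sin (j * π / n)) := by
    rw [prod_reflect n m (n-1) (by omega) hm1 (le_refl _),
      show n - 1 - (n-1) = 0 from by omega, show n - 1 - m = d from by omega]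
  rw [hrefl] at htot
  have hsplit : (∏ j ∈ Finset.Ioc 0 d, (2 * Real.sin (j * π / n)))
      * (∏ j ∈ Finset.Ioc d m, (2 * Real.sin (j * π / n)))
      = ∏ j ∈ Finset.Ioc 0 m, (2 * Real.sin (j * π / n)) :=
    Finset.prod_Ioc_consecutive _ (Nat.zero_le d) hd1
  have hR : 1 ≤ ∏ j ∈ Finset.Ioc d m, (2 * Real.sin (j * π / n))
      ∧ ∏ j ∈ Finset.Ioc d m, (2 * Real.sin (j * π / n)) ≤ 2 := by
    rcases (by omega : d = m ∨ (d + 1 = m ∧ n = 2*m)) with h | ⟨h, hnm⟩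
    · rw [h, Finset.Ioc_self, Finset.prod_empty]
      norm_num
    · have hsingle : Finset.Ioc d m = {m} := by
        ext x
        simp only [Finset.mem_Ioc, Finset.mem_singleton]
        omega
      rw [hsingle, Finset.prod_singleton]
      have hmval : (m:ℝ) * π / n = π / 2 := by
        have hm0 : (m:ℝ) ≠ 0 := by exact_mod_cast (by omega : m ≠ 0)
        rw [hnm]
        push_cast
        field_simp
      rw [hmval, Real.sin_pi_div_two]
      norm_num
  have hPm : 0 < ∏ j ∈ Finset.Ioc 0 m, (2 * Real.sin (j * π / n)) := prod_Ioc_pos hm1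
  have hPd : 0 < ∏ j ∈ Finset.Ioc 0 d, (2 * Real.sin (j * π / n)) := prod_Ioc_pos (by omega)
  have hsq : (∏ j ∈ Finset.Ioc 0 m, (2 * Real.sin (j * π / n)))^2
      = n * (∏ j ∈ Finset.Ioc d m, (2 * Real.sin (j * π / n))) := by
    nlinarith [htot, hsplit]
  have hn0 : (0:ℝ) < n := by exact_mod_cast (by omega : 0 < n)
  have hlow : (n:ℝ) ≤ (∏ j ∈ Finset.Ioc 0 m, (2 * Real.sin (j * π / n)))^2 := by
    nlinarith [hR.1]
  have hhigh : (∏ j ∈ Finset.Ioc 0 m, (2 * Real.sin (j * π / n)))^2 ≤ 2*(n:ℝ) := by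
    nlinarith [hR.2]
  have hIcc : Finset.Icc 1 m = Finset.Ioc 0 m := Finset.Icc_add_one_left_eq_Ioc 0 m
  rw [hIcc]
  constructor
  · have := Real.log_le_log hn0 hlow
    rw [Real.log_pow] at this
    push_cast at this
    linarith
  · have := Real.log_le_log (by positivity) hhigh
    rw [Real.log_pow] at this
    push_cast at this
    linarith


lemma div_four_tendsto (k : ℕ → ℕ) (C : ℕ)
    (h : ∀ᶠ n : ℕ in atTop, n ≤ 4 * k n + C ∧ 4 * k n ≤ n + C) :
    Tendsto (fun n : ℕ => (k n : ℝ)/n) atTop (𝓝 (1/4)) := by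
  have h0 : Tendsto (fun n : ℕ => (k n : ℝ)/n - 1/4) atTop (𝓝 0) := by
    apply squeeze_zero_norm' (a := fun n : ℕ => (C:ℝ)/n)
    · filter_upwards [h, eventually_ge_atTop 1] with n hab h1
      obtain ⟨ha, hb⟩ := hab
      have hn0 : (0:ℝ) < n := by exact_mod_cast (by omega : 0 < n)
      have e : (k n:ℝ)/n - 1/4 = (4*(k n:ℝ) - n)/(4*n) := by field_simp
      rw [Real.norm_eq_abs, e, abs_div, abs_of_pos (by linarith : (0:ℝ) < 4*n)]
      have habs : |4*(k n:ℝ) - n| ≤ (C:ℝ) := by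
        rw [abs_le]
        constructor
        · have : (n:ℝ) ≤ 4*(k n) + C := by exact_mod_cast ha
          linarith
        · have : 4*((k n):ℝ) ≤ n + C := by exact_mod_cast hb
          linarith
      calc |4*(k n:ℝ) - n|/(4*n) ≤ (C:ℝ)/(4*n) := by gcongr
        _ ≤ (C:ℝ)/n := by
          rw [div_le_div_iff₀ (by linarith) (by linarith)]
          nlinarith [Nat.cast_nonneg (α := ℝ) C]
    · exact tendsto_const_div_atTop_nhds_zero_nat _
  have h2 := h0.add_const (1/4)
  rw [zero_add] at h2
  exact h2.congr (fun n => by ring)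

lemma tendsto_logn : Tendsto (fun n : ℕ => Real.log n / (n:ℝ)) atTop (𝓝 0) := by
  have h1 : Tendsto (fun x : ℝ => Real.log x / x) atTop (𝓝 0) :=
    Real.isLittleO_log_id_atTop.tendsto_div_nhds_zero
  exact h1.comp (tendsto_natCast_atTop_atTop (R := ℝ))

theorem dominant_term_growth_rate :
    Filter.Tendsto
      (fun n : ℕ => (2 * Real.pi / n) *
        (8 * Real.log (∏ j ∈ Finset.Icc (n / 4 + 1) (n / 4 + n / 2),
              2 * Real.sin (j * Real.pi / n)) -
          4 * Real.log (∏ j ∈ Finset.Icc 1 (n / 2), 2 * Real.sin (j * Real.pi / n))))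
      Filter.atTop (nhds (32 * lob (Real.pi / 4))) := by
  have hπ := Real.pi_pos
  set J := ∫ t in (0:ℝ)..(π/4), lsin t with hJdef
  have hlob : lob (π/4) = -J := by
    rw [lob, hJdef]
    congr 1
    apply intervalIntegral.integral_congr
    intro t ht
    rw [Set.uIcc_of_le (by positivity)] at ht
    have hs : 0 ≤ Real.sin t := Real.sin_nonneg_of_nonneg_of_le_pi ht.1 (by
      have := ht.2
      linarith)
    show Real.log |2 * Real.sin t| = lsin t
    rw [lsin, abs_of_nonneg (by linarith)]
  -- Riemann sums
  have RS1 := riemann_sum (fun n => n / 4)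
    (by filter_upwards [eventually_ge_atTop 16] with n hn; omega)
    (by filter_upwards [eventually_ge_atTop 16] with n hn; omega)
    (div_four_tendsto _ 3 (by filter_upwards with n; omega))
  have RS2 := riemann_sum (fun n => n - 1 - n / 4 - n / 2)
    (by filter_upwards [eventually_ge_atTop 16] with n hn; omega)
    (by filter_upwards [eventually_ge_atTop 16] with n hn; omega)
    (div_four_tendsto _ 12 (by filter_upwards with n; omega))
  -- first term → 0
  have hT1 : Tendsto (fun n : ℕ => 2*π/(n:ℝ) * (8 * Real.log n)) atTop (𝓝 0) := by
    have := tendsto_logn.const_mul (16*π)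
    rw [mul_zero] at this
    exact this.congr (fun n => by ring)
  -- last term → 0
  have hT4 : Tendsto (fun n : ℕ => 2*π/(n:ℝ) *
      (4 * Real.log (∏ j ∈ Finset.Icc 1 (n / 2), 2 * Real.sin (j * π / n)))) atTop (𝓝 0) := by
    have hl : Tendsto (fun n : ℕ => 2*π/(n:ℝ) * (4 * (Real.log n / 2))) atTop (𝓝 0) := by
      have := tendsto_logn.const_mul (4*π)
      rw [mul_zero] at this
      exact this.congr (fun n => by ring)
    have hu : Tendsto (fun n : ℕ => 2*π/(n:ℝ) * (4 * (Real.log (2*(n:ℝ)) / 2))) atTop (𝓝 0) := by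
      have h2 : Tendsto (fun n : ℕ => (4*π*Real.log 2)/(n:ℝ)) atTop (𝓝 0) :=
        tendsto_const_div_atTop_nhds_zero_nat _
      have h3 := h2.add (tendsto_logn.const_mul (4*π))
      rw [mul_zero, add_zero] at h3
      apply h3.congr'
      filter_upwards [eventually_ge_atTop 1] with n hn
      have hn0 : (n:ℝ) ≠ 0 := by exact_mod_cast (by omega : n ≠ 0)
      rw [Real.log_mul two_ne_zero hn0]
      ring
    apply tendsto_of_tendsto_of_tendsto_of_le_of_le' hl hu
    · filter_upwards [eventually_ge_atTop 2] with n hn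
      have hn0 : (0:ℝ) < n := by exact_mod_cast (by omega : 0 < n)
      have hb := (half_log_bounds n hn).1
      gcongr
    · filter_upwards [eventually_ge_atTop 2] with n hn
      have hn0 : (0:ℝ) < n := by exact_mod_cast (by omega : 0 < n)
      have hb := (half_log_bounds n hn).2
      gcongr
  have combined := ((hT1.sub ((RS1.const_mul 16).add (RS2.const_mul 16))).sub hT4)
  rw [show ((0:ℝ) - (16 * J + 16 * J)) - 0 = 32 * lob (π/4) from by rw [hlob]; ring] at combined
  apply combined.congr'
  filter_upwards [eventually_ge_atTop 16] with n hn
  have hml := middle_log n (by omega)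
  rw [hml]
  ring
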